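/- Let F be a field and let (P,B,I) be the affine plane over F, with (F,+) acting on F by addition. Define the gain function φ by φ({L_b,(b,y)}) = -by and φ({L_{m,b},(x,mx+b)}) = xb. Then the incidence structure 𝔐(Γ,φ) obtained from Construction 𝔐 is a generalized quadrangle. -/

import Mathlib

open Classical

/-- An incidence structure: points `P`, lines `B`, incidence relation `inc`. -/
structure IncStruct (P B : Type*) where
  inc : P → B → Prop

namespace IncStruct

variable {P B : Type*}

/-- Adjacency in the incidence graph on `P ⊕ B`. -/
def adj (S : IncStruct P B) : P ⊕ B → P ⊕ B → Prop
  | Sum.inl p, Sum.inr b => S.inc p b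
  | Sum.inr b, Sum.inl p => S.inc p b
  | _, _ => False

/-- `c` is a `k`-chain from `u` to `v`: a list of `k+1` elements, starting at `u`,
ending at `v`, with consecutive elements incident. -/
def IsNChain (S : IncStruct P B) (k : ℕ) (u v : P ⊕ B) (c : List (P ⊕ B)) : Prop :=
  c.length = k + 1 ∧ c.head? = some u ∧ c.getLast? = some v ∧ c.Chain' S.adj

/-- Distance between two elements of an incidence structure: the least length of a
chain from `u` to `v`, or `∞` if there is none. -/
noncomputable def dist (S : IncStruct P B) (u v : P ⊕ B) : ℕ∞ :=
  sInf {n : ℕ∞ | ∃ (k : ℕ) (c : List (P ⊕ B)), n = (k : ℕ∞) ∧ S.IsNChain k u v c}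

/-- A linear space: two distinct points lie on a unique common line, every line has
at least two points, and some point-line pair is non-incident. -/
def IsLinearSpace (S : IncStruct P B) : Prop :=
  (∀ p q : P, p ≠ q → ∃! b : B, S.inc p b ∧ S.inc q b) ∧
  (∀ b : B, ∃ p q : P, p ≠ q ∧ S.inc p b ∧ S.inc q b) ∧
  (∃ (p : P) (b : B), ¬ S.inc p b)

/-- A generalized quadrangle: all distances are at most `4`, and whenever
`d(u,v) = k < 4` there is a unique `k`-chain from `u` to `v`. -/
def IsGQ (S : IncStruct P B) : Prop :=
  (∀ u v : P ⊕ B, S.dist u v ≤ 4) ∧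
  ∀ (u v : P ⊕ B) (k : ℕ), k < 4 → S.dist u v = (k : ℕ∞) →
    ∃! c : List (P ⊕ B), S.IsNChain k u v c

end IncStruct

section ConstructionAdd

variable {P B G : Type*} [AddGroup G]

/-- Additive version of the incidence of Construction 𝔐. -/
def MincAdd (S : IncStruct P B) (φ : B → P → G) (Λ : Type*) [AddAction G Λ] :
    P ⊕ B × Λ → P × Λ → Prop
  | Sum.inl q, (p, _) => q = p
  | Sum.inr (b, l), (p, m) => S.inc p b ∧ m = φ b p +ᵥ l

/-- The incidence structure 𝔐(Γ,φ) for an additive gain group. -/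
def MStructAdd (S : IncStruct P B) (φ : B → P → G) (Λ : Type*) [AddAction G Λ] :
    IncStruct (P ⊕ B × Λ) (P × Λ) := ⟨MincAdd S φ Λ⟩

end ConstructionAdd

section Affine

variable {F : Type*} [Field F]

/-- Incidence in the affine plane over `F`: lines are `Sum.inl b` (the vertical line
`L_b`) and `Sum.inr (m, b)` (the line `L_{m,b}` with slope `m` and `y`-intercept `b`). -/
def affInc (p : F × F) : F ⊕ F × F → Prop
  | Sum.inl b => p.1 = b
  | Sum.inr (m, b) => p.2 = m * p.1 + b

/-- The affine plane over `F` as an incidence structure. -/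
def affPlane (F : Type*) [Field F] : IncStruct (F × F) (F ⊕ F × F) := ⟨fun p L => affInc p L⟩

/-- The gain function: `φ({L_b,(b,y)}) = -b*y` and `φ({L_{m,b},(x,mx+b)}) = x*b`. -/
def affGain : F ⊕ F × F → F × F → F
  | Sum.inl b, p => -(b * p.2)
  | Sum.inr (_, b), p => p.1 * b

/-- The unique line through two distinct points of the affine plane. -/
noncomputable def lineThrough (p q : F × F) : F ⊕ F × F :=
  if p.1 = q.1 then Sum.inl p.1
  else Sum.inr ((p.2 - q.2) / (p.1 - q.1), q.2 - (p.2 - q.2) / (p.1 - q.1) * q.1)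

/-- `ρ_{L,p}(q) = φ(Mp) - φ(Mq) + φ(Lq)`, where `M` is the line through `p` and `q`. -/
noncomputable def rhoAff (L : F ⊕ F × F) (p q : F × F) : F :=
  affGain (lineThrough p q) p - affGain (lineThrough p q) q + affGain L q

end Affine

section AuxGeo

variable {F : Type*} [Field F]

/-- Parametrization of the points of a line. -/
def ptOn : F ⊕ F × F → F → F × F
  | Sum.inl b, t => (b, t)
  | Sum.inr (m, c), t => (t, m * t + c)

/-- The parameter of a point on a line. -/
def coordOn : F ⊕ F × F → F × F → F
  | Sum.inl _, p => p.2
  | Sum.inr _, p => p.1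

lemma affInc_ptOn (L : F ⊕ F × F) (t : F) : affInc (ptOn L t) L := by
  rcases L with b | ⟨m, c⟩ <;> simp [ptOn, affInc]

lemma ptOn_coordOn {L : F ⊕ F × F} {p : F × F} (h : affInc p L) :
    ptOn L (coordOn L p) = p := by
  rcases L with b | ⟨m, c⟩ <;> rcases p with ⟨x, y⟩ <;>
    simp [affInc] at h <;> simp [ptOn, coordOn, h]

lemma lineThrough_inc_left (p q : F × F) : affInc p (lineThrough p q) := by
  rcases eq_or_ne p.1 q.1 with h | h
  · simp [lineThrough, h, affInc]
  · have h' : p.1 - q.1 ≠ 0 := sub_ne_zero.mpr h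
    simp only [lineThrough, if_neg h, affInc]
    field_simp
    ring

lemma lineThrough_inc_right (p q : F × F) : affInc q (lineThrough p q) := by
  rcases eq_or_ne p.1 q.1 with h | h
  · simp [lineThrough, h, affInc]
  · simp only [lineThrough, if_neg h, affInc]
    ring

lemma eq_lineThrough {p q : F × F} {L : F ⊕ F × F} (hpq : p ≠ q)
    (hp : affInc p L) (hq : affInc q L) : L = lineThrough p q := by
  rcases L with b | ⟨m, c⟩
  · simp only [affInc] at hp hq
    rw [lineThrough, if_pos (by rw [hp, hq])]
    rw [hp]
  · simp only [affInc] at hp hq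
    have hx : p.1 ≠ q.1 := by
      intro h
      apply hpq
      have : p.2 = q.2 := by rw [hp, hq, h]
      exact Prod.ext h this
    have h' : p.1 - q.1 ≠ 0 := sub_ne_zero.mpr hx
    have hm : (p.2 - q.2) / (p.1 - q.1) = m := by
      rw [hp, hq]; field_simp; ring
    simp only [lineThrough, if_neg hx, hm]
    congr 1
    rw [hq]; ring

end AuxGeo
section AuxRho

variable {F : Type*} [Field F]

/-- The gain transfer expression along the line from `ptOn L t` to `q`. -/
noncomputable def rhoExpr (L : F ⊕ F × F) (q : F × F) (t : F) : F :=
  affGain L (ptOn L t) - affGain (lineThrough (ptOn L t) q) (ptOn L t)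
    + affGain (lineThrough (ptOn L t) q) q

lemma rhoExpr_linear (L : F ⊕ F × F) (q : F × F) (hq : ¬ affInc q L) :
    ∃ α β : F, α ≠ 0 ∧ ∀ t : F, rhoExpr L q t = α * t + β := by
  rcases L with b | ⟨m, c⟩
  · -- vertical line L_b ; q.1 ≠ b
    have hq1 : q.1 ≠ b := fun h => hq h
    have hsub : b - q.1 ≠ 0 := sub_ne_zero.mpr (fun h => hq1 h.symm)
    refine ⟨q.1 - b, -(b * q.2), sub_ne_zero.mpr hq1, fun t => ?_⟩
    have hL : lineThrough (ptOn (Sum.inl b : F ⊕ F × F) t) q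
        = Sum.inr ((t - q.2) / (b - q.1), q.2 - (t - q.2) / (b - q.1) * q.1) := by
      rw [lineThrough]
      simp only [ptOn]
      exact if_neg (fun h : b = q.1 => hq1 h.symm)
    rw [rhoExpr, hL]
    simp only [ptOn, affGain]
    field_simp
    ring
  · -- non-vertical line L_{m,c} ; q.2 ≠ m*q.1 + c
    have hq2 : q.2 ≠ m * q.1 + c := fun h => hq h
    refine ⟨q.1 * m + c - q.2, q.1 * c, by
      intro h; apply hq2; linear_combination -h, fun t => ?_⟩
    rcases eq_or_ne t q.1 with ht | ht
    · have hL : lineThrough (ptOn (Sum.inr (m, c) : F ⊕ F × F) t) q = Sum.inl t := by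
        rw [lineThrough]
        simp only [ptOn]
        exact if_pos ht
      rw [rhoExpr, hL]
      simp only [ptOn, affGain]
      subst ht; ring
    · have hsub : t - q.1 ≠ 0 := sub_ne_zero.mpr ht
      have hL : lineThrough (ptOn (Sum.inr (m, c) : F ⊕ F × F) t) q
          = Sum.inr ((m * t + c - q.2) / (t - q.1),
              q.2 - (m * t + c - q.2) / (t - q.1) * q.1) := by
        rw [lineThrough]
        simp only [ptOn]
        exact if_neg ht
      rw [rhoExpr, hL]
      simp only [ptOn, affGain]
      field_simp
      ring

lemma rhoExpr_inj (L : F ⊕ F × F) (q : F × F) (hq : ¬ affInc q L) {t t' : F}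
    (h : rhoExpr L q t = rhoExpr L q t') : t = t' := by
  obtain ⟨α, β, hα, hf⟩ := rhoExpr_linear L q hq
  rw [hf, hf] at h
  exact mul_left_cancel₀ hα (by linear_combination h)

lemma rhoExpr_surj (L : F ⊕ F × F) (q : F × F) (hq : ¬ affInc q L) (r : F) :
    ∃ t : F, rhoExpr L q t = r := by
  obtain ⟨α, β, hα, hf⟩ := rhoExpr_linear L q hq
  exact ⟨(r - β) / α, by rw [hf]; field_simp; ring⟩

end AuxRho
section AuxChain

variable {P B : Type*} {S : IncStruct P B}

lemma adj_symm {u v : P ⊕ B} (h : S.adj u v) : S.adj v u := by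
  rcases u with p | b <;> rcases v with p' | b' <;> simp_all [IncStruct.adj]

lemma isNChain_reverse {k : ℕ} {u v : P ⊕ B} {c : List (P ⊕ B)}
    (h : S.IsNChain k u v c) : S.IsNChain k v u c.reverse := by
  obtain ⟨hl, hh, hg, hc⟩ := h
  refine ⟨by simpa using hl, by simpa [List.head?_reverse] using hg,
    by simpa [List.getLast?_reverse] using hh, ?_⟩
  simp only [List.Chain'] at hc ⊢
  rw [List.isChain_reverse]
  exact hc.imp (fun a b h => adj_symm h)

lemma chain0 (u : P ⊕ B) : S.IsNChain 0 u u [u] := ⟨rfl, rfl, rfl, List.isChain_singleton u⟩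

lemma chain1 {u v : P ⊕ B} (h : S.adj u v) : S.IsNChain 1 u v [u, v] :=
  ⟨rfl, rfl, rfl, by simp [List.Chain', List.isChain_cons_cons, h]⟩

lemma chain2 {u w v : P ⊕ B} (h1 : S.adj u w) (h2 : S.adj w v) :
    S.IsNChain 2 u v [u, w, v] := ⟨rfl, rfl, rfl, by simp [List.Chain', List.isChain_cons_cons, h1, h2]⟩

lemma chain3 {u a b v : P ⊕ B} (h1 : S.adj u a) (h2 : S.adj a b) (h3 : S.adj b v) :
    S.IsNChain 3 u v [u, a, b, v] := ⟨rfl, rfl, rfl, by simp [List.Chain', List.isChain_cons_cons, h1, h2, h3]⟩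

lemma chain_snoc {k : ℕ} {u w v : P ⊕ B} {c : List (P ⊕ B)}
    (h : S.IsNChain k u w c) (hadj : S.adj w v) : S.IsNChain (k + 1) u v (c ++ [v]) := by
  obtain ⟨hl, hh, hg, hc⟩ := h
  have hne : c ≠ [] := by rintro rfl; simp at hl
  refine ⟨by simp [hl], ?_, ?_, ?_⟩
  · rcases c with _ | ⟨a, c⟩
    · simp at hl
    · simpa using hh
  · simp
  · simp only [List.Chain'] at hc ⊢
    rw [List.isChain_append]
    refine ⟨hc, List.isChain_singleton v, ?_⟩
    intro a ha b hb
    simp at hb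
    subst hb
    rw [hg] at ha
    simp at ha
    subst ha
    exact hadj

lemma chain_cons {k : ℕ} {u w v : P ⊕ B} {c : List (P ⊕ B)}
    (h : S.IsNChain k w v c) (hadj : S.adj u w) : S.IsNChain (k + 1) u v (u :: c) := by
  have := chain_snoc (isNChain_reverse h) (adj_symm hadj)
  have h2 := isNChain_reverse this
  simpa using h2

lemma chain0_elim {u v : P ⊕ B} {c : List (P ⊕ B)} (h : S.IsNChain 0 u v c) :
    c = [u] ∧ u = v := by
  obtain ⟨hl, hh, hg, _⟩ := h
  rcases c with _ | ⟨a, _ | ⟨b, c⟩⟩ <;> simp_all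

lemma chain1_elim {u v : P ⊕ B} {c : List (P ⊕ B)} (h : S.IsNChain 1 u v c) :
    c = [u, v] ∧ S.adj u v := by
  obtain ⟨hl, hh, hg, hc⟩ := h
  rcases c with _ | ⟨a, _ | ⟨b, rest⟩⟩
  · simp at hl
  · simp at hl
  · have : rest = [] := by simpa using hl
    subst this
    simp at hh hg
    subst hh; subst hg
    simp [List.Chain', List.isChain_cons_cons] at hc
    exact ⟨rfl, hc⟩

lemma chain2_elim {u v : P ⊕ B} {c : List (P ⊕ B)} (h : S.IsNChain 2 u v c) :
    ∃ w, c = [u, w, v] ∧ S.adj u w ∧ S.adj w v := by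
  obtain ⟨hl, hh, hg, hc⟩ := h
  rcases c with _ | ⟨a, _ | ⟨b, _ | ⟨d, rest⟩⟩⟩
  · simp at hl
  · simp at hl
  · simp at hl
  · have : rest = [] := by simpa using hl
    subst this
    simp at hh hg
    subst hh; subst hg
    simp only [List.Chain', List.isChain_cons_cons, List.isChain_singleton, and_true] at hc
    exact ⟨b, rfl, hc.1, hc.2⟩

lemma chain3_elim {u v : P ⊕ B} {c : List (P ⊕ B)} (h : S.IsNChain 3 u v c) :
    ∃ a b, c = [u, a, b, v] ∧ S.adj u a ∧ S.adj a b ∧ S.adj b v := by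
  obtain ⟨hl, hh, hg, hc⟩ := h
  rcases c with _ | ⟨a, _ | ⟨b, _ | ⟨d, _ | ⟨e, rest⟩⟩⟩⟩
  · simp at hl
  · simp at hl
  · simp at hl
  · simp at hl
  · have : rest = [] := by simpa using hl
    subst this
    simp at hh hg
    subst hh; subst hg
    simp only [List.Chain', List.isChain_cons_cons, List.isChain_singleton, and_true] at hc
    exact ⟨b, d, rfl, hc.1, hc.2.1, hc.2.2⟩

lemma dist_le_of_chain {k : ℕ} {u v : P ⊕ B} {c : List (P ⊕ B)}
    (h : S.IsNChain k u v c) : S.dist u v ≤ (k : ℕ∞) :=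
  sInf_le ⟨k, c, rfl, h⟩

lemma dist_spec {k : ℕ} {u v : P ⊕ B} (h : S.dist u v = (k : ℕ∞)) :
    (∃ c, S.IsNChain k u v c) ∧ ∀ (j : ℕ) (c : List (P ⊕ B)), S.IsNChain j u v c → k ≤ j := by
  set s : Set ℕ := {j | ∃ c, S.IsNChain j u v c} with hs
  have hne : s.Nonempty := by
    by_contra hemp
    have hempty : {n : ℕ∞ | ∃ (j : ℕ) (c : List (P ⊕ B)), n = (j : ℕ∞) ∧ S.IsNChain j u v c}
        = ∅ := by
      rw [Set.eq_empty_iff_forall_notMem]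
      rintro n ⟨j, c, rfl, hc⟩
      exact hemp ⟨j, ⟨c, hc⟩⟩
    have : S.dist u v = ⊤ := by rw [IncStruct.dist, hempty, sInf_empty]
    rw [h] at this
    exact ENat.coe_ne_top k this
  have hmem : sInf s ∈ s := Nat.sInf_mem hne
  have hdist : S.dist u v = ((sInf s : ℕ) : ℕ∞) := by
    apply le_antisymm
    · obtain ⟨c, hc⟩ := hmem
      exact dist_le_of_chain hc
    · apply le_sInf
      rintro n ⟨j, c, rfl, hc⟩
      exact_mod_cast Nat.sInf_le (show j ∈ s from ⟨c, hc⟩)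
  rw [h] at hdist
  have hk : k = sInf s := by exact_mod_cast hdist
  constructor
  · exact hk ▸ hmem
  · intro j c hc
    exact hk ▸ Nat.sInf_le (show j ∈ s from ⟨c, hc⟩)

lemma existsUnique_reverse {k : ℕ} {u v : P ⊕ B}
    (h : ∃! c, S.IsNChain k v u c) : ∃! c, S.IsNChain k u v c := by
  obtain ⟨c₀, hc₀, huniq⟩ := h
  refine ⟨c₀.reverse, isNChain_reverse hc₀, ?_⟩
  intro c hc
  have hrev := huniq c.reverse (isNChain_reverse hc)
  calc c = c.reverse.reverse := (List.reverse_reverse c).symm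
    _ = c₀.reverse := by rw [hrev]

lemma distSymm (u v : P ⊕ B) : S.dist u v = S.dist v u := by
  unfold IncStruct.dist
  congr 1
  ext n
  constructor <;> rintro ⟨j, c, rfl, hc⟩ <;> exact ⟨j, c.reverse, rfl, isNChain_reverse hc⟩

end AuxChain
section AuxAff

variable {F : Type*} [Field F]

/-- Abbreviation for the Construction 𝔐 structure on the affine plane. -/
noncomputable abbrev SMa (F : Type*) [Field F] :
    IncStruct ((F × F) ⊕ (F ⊕ F × F) × F) ((F × F) × F) :=
  MStructAdd (affPlane F) (fun L p => affGain L p) F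

lemma adj_xz {p q : F × F} {μ : F} :
    (SMa F).adj (Sum.inl (Sum.inl p)) (Sum.inr (q, μ)) ↔ p = q := Iff.rfl

lemma adj_zx {p q : F × F} {μ : F} :
    (SMa F).adj (Sum.inr (q, μ)) (Sum.inl (Sum.inl p)) ↔ p = q := Iff.rfl

lemma adj_yz {L : F ⊕ F × F} {l : F} {q : F × F} {μ : F} :
    (SMa F).adj (Sum.inl (Sum.inr (L, l))) (Sum.inr (q, μ)) ↔
      affInc q L ∧ μ = affGain L q + l := Iff.rfl

lemma adj_zy {L : F ⊕ F × F} {l : F} {q : F × F} {μ : F} :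
    (SMa F).adj (Sum.inr (q, μ)) (Sum.inl (Sum.inr (L, l))) ↔
      affInc q L ∧ μ = affGain L q + l := Iff.rfl

lemma not_adj_ll {a b : (F × F) ⊕ (F ⊕ F × F) × F} :
    ¬ (SMa F).adj (Sum.inl a) (Sum.inl b) := fun h => h

lemma not_adj_rr {a b : (F × F) × F} :
    ¬ (SMa F).adj (Sum.inr a) (Sum.inr b) := fun h => h

end AuxAff
section AuxMain

variable {F : Type*} [Field F]

lemma mid_unique {u v w w' : ((F × F) ⊕ (F ⊕ F × F) × F) ⊕ (F × F) × F}
    (hne : u ≠ v) (h1 : (SMa F).adj u w) (h2 : (SMa F).adj w v)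
    (h1' : (SMa F).adj u w') (h2' : (SMa F).adj w' v) : w = w' := by
  rcases u with au | ⟨p, μ⟩
  · rcases v with av | ⟨q, μ'⟩
    · -- both sides points of 𝔐 ; middles are lines of 𝔐
      rcases w with wl | ⟨r, s⟩
      · exact absurd h1 not_adj_ll
      rcases w' with wl' | ⟨r', s'⟩
      · exact absurd h1' not_adj_ll
      rcases au with p | ⟨L, l⟩ <;> rcases av with q | ⟨M, m⟩
      · -- x_p , x_q
        exfalso
        rw [adj_xz] at h1; rw [adj_zx] at h2
        have : p = q := h1.trans h2.symm
        subst this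
        exact hne rfl
      · -- x_p , y_{M,m}
        rw [adj_xz] at h1 h1'; rw [adj_zy] at h2 h2'
        subst h1; subst h1'
        rw [h2.2, h2'.2]
      · -- y , x
        rw [adj_yz] at h1 h1'; rw [adj_zx] at h2 h2'
        subst h2; subst h2'
        rw [h1.2, h1'.2]
      · -- y_{L,l} , y_{M,m}
        rw [adj_yz] at h1 h1'; rw [adj_zy] at h2 h2'
        by_cases hr : r = r'
        · subst hr; rw [h1.2, h1'.2]
        · exfalso
          have hL : L = lineThrough r r' := eq_lineThrough hr h1.1 h1'.1
          have hM : M = lineThrough r r' := eq_lineThrough hr h2.1 h2'.1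
          have hLM : L = M := hL.trans hM.symm
          subst hLM
          have hlm : l = m := by
            have := h1.2.symm.trans h2.2
            linear_combination this
          apply hne
          rw [hlm]
    · -- u point-side, v line-side: impossible middles
      rcases w with wl | wr
      · exact absurd h1 not_adj_ll
      · exact absurd h2 not_adj_rr
  · rcases v with av | ⟨q, μ'⟩
    · rcases w with wl | wr
      · exact absurd h2 not_adj_ll
      · exact absurd h1 not_adj_rr
    · -- u = z_{p,μ}, v = z_{q,μ'}
      rcases w with (r | ⟨L, l⟩) | wr
      · rcases w' with (r' | ⟨L', l'⟩) | wr'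
        · -- both x-type
          rw [adj_zx] at h1 h1'
          rw [h1, h1']
        · -- x and y
          exfalso
          rw [adj_zx] at h1; rw [adj_xz] at h2
          rw [adj_zy] at h1'; rw [adj_yz] at h2'
          subst h1; subst h2
          apply hne
          have : μ' = μ := by rw [h2'.2, h1'.2]
          rw [this]
        · exact absurd h1' not_adj_rr
      · rcases w' with (r' | ⟨L', l'⟩) | wr'
        · -- y and x
          exfalso
          rw [adj_zy] at h1; rw [adj_yz] at h2
          rw [adj_zx] at h1'; rw [adj_xz] at h2'
          subst h1'; subst h2'
          apply hne
          have : μ' = μ := by rw [h2.2, h1.2]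
          rw [this]
        · -- both y-type
          rw [adj_zy] at h1 h1'; rw [adj_yz] at h2 h2'
          by_cases hpq : p = q
          · exfalso
            subst hpq
            apply hne
            have : μ' = μ := by
              rw [h2.2, ← h1.2]
            rw [this]
          · have hL : L = lineThrough p q := eq_lineThrough hpq h1.1 h2.1
            have hL' : L' = lineThrough p q := eq_lineThrough hpq h1'.1 h2'.1
            have hLL : L = L' := hL.trans hL'.symm
            subst hLL
            have : l = l' := by
              have := h1.2.symm.trans h1'.2
              linear_combination this
            rw [this]
        · exact absurd h1' not_adj_rr
      · exact absurd h1 not_adj_rr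

lemma three_unique_core {au : (F × F) ⊕ (F ⊕ F × F) × F} {q : F × F} {μ : F}
    {a b a' b' : ((F × F) ⊕ (F ⊕ F × F) × F) ⊕ (F × F) × F}
    (hnadj : ¬ (SMa F).adj (Sum.inl au) (Sum.inr (q, μ)))
    (h1 : (SMa F).adj (Sum.inl au) a) (h2 : (SMa F).adj a b)
    (h3 : (SMa F).adj b (Sum.inr (q, μ)))
    (h1' : (SMa F).adj (Sum.inl au) a') (h2' : (SMa F).adj a' b')
    (h3' : (SMa F).adj b' (Sum.inr (q, μ))) : a = a' ∧ b = b' := by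
  -- first, `a` and `a'` are lines of 𝔐, `b` and `b'` are points of 𝔐
  rcases a with al | ⟨p, ν⟩
  · exact absurd h1 not_adj_ll
  rcases a' with al' | ⟨p', ν'⟩
  · exact absurd h1' not_adj_ll
  rcases b with bl | br
  swap
  · exact absurd h2 not_adj_rr
  rcases b' with bl' | br'
  swap
  · exact absurd h2' not_adj_rr
  rcases au with pp | ⟨L, l⟩
  · -- u = x_{pp} : 3-chains to z_{q,μ}
    rw [adj_xz] at h1 h1' hnadj
    subst h1; subst h1'
    rcases bl with r | ⟨M, κ⟩
    · exfalso
      rw [adj_zx] at h2; rw [adj_xz] at h3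
      exact hnadj (h2.symm.trans h3)
    rcases bl' with r' | ⟨M', κ'⟩
    · exfalso
      rw [adj_zx] at h2'; rw [adj_xz] at h3'
      exact hnadj (h2'.symm.trans h3')
    rw [adj_zy] at h2 h2'; rw [adj_yz] at h3 h3'
    have hM : M = lineThrough pp q := eq_lineThrough hnadj h2.1 h3.1
    have hM' : M' = lineThrough pp q := eq_lineThrough hnadj h2'.1 h3'.1
    have hMM : M = M' := hM.trans hM'.symm
    subst hMM
    have hκ : κ = κ' := by
      have := h3.2.symm.trans h3'.2
      linear_combination this
    subst hκ
    have hν : ν = ν' := h2.2.trans h2'.2.symm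
    subst hν
    exact ⟨rfl, rfl⟩
  · -- u = y_{L,l}
    rw [adj_yz] at h1 h1' hnadj
    by_cases hqL : affInc q L
    · -- q on L, but wrong gain: middles must go through x_q
      have key : ∀ (pz : F × F) (νz : F) (bz : (F × F) ⊕ (F ⊕ F × F) × F),
          (SMa F).adj (Sum.inl (Sum.inr (L, l))) (Sum.inr (pz, νz)) →
          (SMa F).adj (Sum.inr (pz, νz)) (Sum.inl bz) →
          (SMa F).adj (Sum.inl bz) (Sum.inr (q, μ)) →
          pz = q ∧ νz = affGain L q + l ∧ bz = Sum.inl q := by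
        intro pz νz bz g1 g2 g3
        rw [adj_yz] at g1
        rcases bz with r | ⟨M, κ⟩
        · rw [adj_zx] at g2; rw [adj_xz] at g3
          subst g2
          subst g3
          exact ⟨rfl, by rw [g1.2], rfl⟩
        · exfalso
          rw [adj_zy] at g2; rw [adj_yz] at g3
          by_cases hpq : pz = q
          · subst hpq
            apply hnadj
            refine ⟨hqL, ?_⟩
            rw [g3.2, ← g2.2, g1.2]
          · have hM : M = lineThrough pz q := eq_lineThrough hpq g2.1 g3.1
            have hL2 : L = lineThrough pz q := eq_lineThrough hpq g1.1 hqL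
            have hML : M = L := hM.trans hL2.symm
            subst hML
            have hκ : κ = l := by
              have := g2.2.symm.trans g1.2
              linear_combination this
            subst hκ
            exact hnadj ⟨hqL, g3.2⟩
      obtain ⟨e1, e2, e3⟩ := key p ν bl h1 h2 h3
      obtain ⟨e1', e2', e3'⟩ := key p' ν' bl' h1' h2' h3'
      subst e1; subst e1'
      rw [e2, e2', e3, e3']
      exact ⟨rfl, rfl⟩
    · -- q not on L : the ρ-map is injective
      have key : ∀ (pz : F × F) (νz : F) (bz : (F × F) ⊕ (F ⊕ F × F) × F),
          (SMa F).adj (Sum.inl (Sum.inr (L, l))) (Sum.inr (pz, νz)) →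
          (SMa F).adj (Sum.inr (pz, νz)) (Sum.inl bz) →
          (SMa F).adj (Sum.inl bz) (Sum.inr (q, μ)) →
          affInc pz L ∧ νz = affGain L pz + l ∧
            bz = Sum.inr (lineThrough pz q, μ - affGain (lineThrough pz q) q) ∧
            rhoExpr L q (coordOn L pz) = μ - l := by
        intro pz νz bz g1 g2 g3
        rw [adj_yz] at g1
        rcases bz with r | ⟨M, κ⟩
        · exfalso
          rw [adj_zx] at g2; rw [adj_xz] at g3
          apply hqL
          rw [← g3, g2]
          exact g1.1
        · rw [adj_zy] at g2; rw [adj_yz] at g3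
          have hpq : pz ≠ q := fun h => hqL (h ▸ g1.1)
          have hM : M = lineThrough pz q := eq_lineThrough hpq g2.1 g3.1
          subst hM
          have hκ : κ = μ - affGain (lineThrough pz q) q := by
            have := g3.2
            linear_combination -this
          refine ⟨g1.1, g1.2, by rw [hκ], ?_⟩
          have hpt : ptOn L (coordOn L pz) = pz := ptOn_coordOn g1.1
          rw [rhoExpr, hpt]
          have hg : νz = affGain (lineThrough pz q) pz + κ := g2.2
          rw [g1.2, hκ] at hg
          linear_combination hg
      obtain ⟨e1, e2, e3, e4⟩ := key p ν bl h1 h2 h3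
      obtain ⟨e1', e2', e3', e4'⟩ := key p' ν' bl' h1' h2' h3'
      have ht : coordOn L p = coordOn L p' := rhoExpr_inj L q hqL (e4.trans e4'.symm)
      have hpp : p = p' := by
        rw [← ptOn_coordOn e1, ← ptOn_coordOn e1', ht]
      subst hpp
      rw [e2, e2', e3, e3']
      exact ⟨rfl, rfl⟩

lemma exists_chain_xz (p q : F × F) (μ : F) :
    ∃ k, k ≤ 3 ∧ ∃ c, (SMa F).IsNChain k (Sum.inl (Sum.inl p)) (Sum.inr (q, μ)) c := by
  by_cases h : p = q
  · subst h
    exact ⟨1, by norm_num, _, chain1 (adj_xz.mpr rfl)⟩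
  · refine ⟨3, le_refl 3, _, chain3 (u := Sum.inl (Sum.inl p))
      (a := Sum.inr (p, affGain (lineThrough p q) p + (μ - affGain (lineThrough p q) q)))
      (b := Sum.inl (Sum.inr (lineThrough p q, μ - affGain (lineThrough p q) q)))
      (v := Sum.inr (q, μ)) ?_ ?_ ?_⟩
    · exact adj_xz.mpr rfl
    · exact adj_zy.mpr ⟨lineThrough_inc_left p q, rfl⟩
    · exact adj_yz.mpr ⟨lineThrough_inc_right p q, by ring⟩

lemma exists_chain_yz (L : F ⊕ F × F) (l : F) (q : F × F) (μ : F) :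
    ∃ k, k ≤ 3 ∧ ∃ c, (SMa F).IsNChain k (Sum.inl (Sum.inr (L, l))) (Sum.inr (q, μ)) c := by
  by_cases hq : affInc q L
  · refine ⟨3, le_refl 3, _, chain3 (u := Sum.inl (Sum.inr (L, l)))
      (a := Sum.inr (q, affGain L q + l)) (b := Sum.inl (Sum.inl q))
      (v := Sum.inr (q, μ)) ?_ ?_ ?_⟩
    · exact adj_yz.mpr ⟨hq, rfl⟩
    · exact adj_zx.mpr rfl
    · exact adj_xz.mpr rfl
  · obtain ⟨t, ht⟩ := rhoExpr_surj L q hq (μ - l)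
    set p : F × F := ptOn L t with hp
    have hpL : affInc p L := affInc_ptOn L t
    have hpq : p ≠ q := fun h => hq (h ▸ hpL)
    refine ⟨3, le_refl 3, _, chain3 (u := Sum.inl (Sum.inr (L, l)))
      (a := Sum.inr (p, affGain L p + l))
      (b := Sum.inl (Sum.inr (lineThrough p q, μ - affGain (lineThrough p q) q)))
      (v := Sum.inr (q, μ)) ?_ ?_ ?_⟩
    · exact adj_yz.mpr ⟨hpL, rfl⟩
    · refine adj_zy.mpr ⟨lineThrough_inc_left p q, ?_⟩
      rw [rhoExpr, ← hp] at ht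
      linear_combination ht
    · exact adj_yz.mpr ⟨lineThrough_inc_right p q, by ring⟩

end AuxMain
/-- for the affine plane over a field `F` with gain function
`φ(L_b,(b,y)) = -by`, `φ(L_{m,b},(x,mx+b)) = xb` valued in `(F,+)` acting on `F` by
addition, Construction 𝔐 yields a generalized quadrangle. -/
theorem affine_MStruct_isGQ (F : Type*) [Field F] :
    (MStructAdd (affPlane F) (fun L p => affGain L p) F).IsGQ := by
  constructor
  · -- all distances are at most 4
    have bound : ∀ w w' : ((F × F) ⊕ (F ⊕ F × F) × F) ⊕ (F × F) × F,
        (∃ k, k ≤ 4 ∧ ∃ c, (SMa F).IsNChain k w w' c) → (SMa F).dist w w' ≤ 4 := by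
      rintro w w' ⟨k, hk, c, hc⟩
      calc (SMa F).dist w w' ≤ (k : ℕ∞) := dist_le_of_chain hc
        _ ≤ 4 := by exact_mod_cast hk
    intro u v
    rcases u with (p | ⟨L, l⟩) | ⟨zp, zμ⟩ <;> rcases v with (q | ⟨M, m⟩) | ⟨zq, zμ'⟩
    · obtain ⟨k, hk, c, hc⟩ := exists_chain_xz p q 0
      exact bound _ _ ⟨k + 1, by omega, _, chain_snoc hc (adj_zx.mpr rfl)⟩
    · obtain ⟨k, hk, c, hc⟩ := exists_chain_xz p (ptOn M 0) (affGain M (ptOn M 0) + m)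
      exact bound _ _ ⟨k + 1, by omega, _,
        chain_snoc hc (adj_zy.mpr ⟨affInc_ptOn M 0, rfl⟩)⟩
    · obtain ⟨k, hk, c, hc⟩ := exists_chain_xz p zq zμ'
      exact bound _ _ ⟨k, by omega, c, hc⟩
    · obtain ⟨k, hk, c, hc⟩ := exists_chain_yz L l q 0
      exact bound _ _ ⟨k + 1, by omega, _, chain_snoc hc (adj_zx.mpr rfl)⟩
    · obtain ⟨k, hk, c, hc⟩ := exists_chain_yz L l (ptOn M 0) (affGain M (ptOn M 0) + m)
      exact bound _ _ ⟨k + 1, by omega, _,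
        chain_snoc hc (adj_zy.mpr ⟨affInc_ptOn M 0, rfl⟩)⟩
    · obtain ⟨k, hk, c, hc⟩ := exists_chain_yz L l zq zμ'
      exact bound _ _ ⟨k, by omega, c, hc⟩
    · rw [distSymm]
      obtain ⟨k, hk, c, hc⟩ := exists_chain_xz q zp zμ
      exact bound _ _ ⟨k, by omega, c, hc⟩
    · rw [distSymm]
      obtain ⟨k, hk, c, hc⟩ := exists_chain_yz M m zp zμ
      exact bound _ _ ⟨k, by omega, c, hc⟩
    · obtain ⟨k, hk, c, hc⟩ := exists_chain_xz zp zq zμ'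
      exact bound _ _ ⟨k + 1, by omega, _, chain_cons hc (adj_zx.mpr rfl)⟩
  · -- uniqueness of short chains
    intro u v k hk hd
    obtain ⟨⟨c₀, hc₀⟩, hmin⟩ := dist_spec (S := SMa F) hd
    interval_cases k
    · obtain ⟨hce, hueq⟩ := chain0_elim hc₀
      subst hueq
      exact ⟨[u], chain0 u, fun c hc => (chain0_elim hc).1⟩
    · obtain ⟨hce, hadj⟩ := chain1_elim hc₀
      exact ⟨[u, v], chain1 hadj, fun c hc => (chain1_elim hc).1⟩
    · have hne : u ≠ v := by
        rintro rfl
        exact absurd (hmin 0 [u] (chain0 u)) (by omega)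
      obtain ⟨w, hce, ha, hb⟩ := chain2_elim hc₀
      refine ⟨[u, w, v], chain2 ha hb, ?_⟩
      intro c hc
      obtain ⟨w', rfl, ha', hb'⟩ := chain2_elim hc
      rw [mid_unique hne ha' hb' ha hb]
    · have hnadj : ¬ (SMa F).adj u v := fun h =>
        absurd (hmin 1 [u, v] (chain1 h)) (by omega)
      rcases u with au | ⟨zp, zμ⟩
      · rcases v with av | ⟨q, μ⟩
        · exfalso
          obtain ⟨a, b, hce, h1, h2, h3⟩ := chain3_elim hc₀
          rcases a with al | ar
          · exact not_adj_ll h1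
          · rcases b with bl | br
            · exact not_adj_ll h3
            · exact not_adj_rr h2
        · obtain ⟨a, b, hce, h1, h2, h3⟩ := chain3_elim hc₀
          refine ⟨[Sum.inl au, a, b, Sum.inr (q, μ)], chain3 h1 h2 h3, ?_⟩
          intro c hc
          obtain ⟨a', b', rfl, h1', h2', h3'⟩ := chain3_elim hc
          obtain ⟨ea, eb⟩ := three_unique_core hnadj h1' h2' h3' h1 h2 h3
          rw [ea, eb]
      · rcases v with av | ⟨q, μ⟩
        · apply existsUnique_reverse
          have hd' : (SMa F).dist (Sum.inl av) (Sum.inr (zp, zμ)) = ((3 : ℕ) : ℕ∞) := by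
            rw [← hd]
            exact (distSymm _ _).symm
          obtain ⟨⟨c₁, hc₁⟩, hmin'⟩ := dist_spec hd'
          have hnadj' : ¬ (SMa F).adj (Sum.inl av) (Sum.inr (zp, zμ)) := fun h =>
            absurd (hmin' 1 _ (chain1 h)) (by omega)
          obtain ⟨a, b, hce, h1, h2, h3⟩ := chain3_elim hc₁
          refine ⟨[Sum.inl av, a, b, Sum.inr (zp, zμ)], chain3 h1 h2 h3, ?_⟩
          intro c hc
          obtain ⟨a', b', rfl, h1', h2', h3'⟩ := chain3_elim hc
          obtain ⟨ea, eb⟩ := three_unique_core hnadj' h1' h2' h3' h1 h2 h3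
          rw [ea, eb]
        · exfalso
          obtain ⟨a, b, hce, h1, h2, h3⟩ := chain3_elim hc₀
          rcases a with al | ar
          · rcases b with bl | br
            · exact not_adj_ll h2
            · exact not_adj_rr h3
          · exact not_adj_rr h1
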